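/- arXiv:1111.5395 — 2 statements merged into one kernel-verified Lean document; each statement's English description precedes it below -/
import Mathlib

section
/- For any finite simple graph G = (V,E), define the curvature K(p) = 1 + Σ_{k≥1} (-1)^k V_{k-1}(p)/(k+1), where V_{k-1}(p) is the number of K_k-subgraphs in the neighborhood of p. Then Σ_{p∈V} K(p) = χ(G), where χ(G) = Σ_{k≥0} (-1)^k v_k is the Euler characteristic and v_k is the number of K_{k+1}-subgraphs of G. -/
open Finset SimpleGraph

variable {V : Type*}

/-- `V_{k-1}(p)`: the number of `K_k`-subgraphs contained in the neighborhood of `p`. -/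
def sphereCliqueCount (G : SimpleGraph V) [Fintype V] [DecidableEq V] [DecidableRel G.Adj]
    (p : V) (k : ℕ) : ℕ :=
  ((G.cliqueFinset k).filter (fun s => s ⊆ G.neighborFinset p)).card

/-- The curvature `K(p) = 1 + Σ_{k ≥ 1} (-1)^k V_{k-1}(p)/(k+1)` (the sum is finite, since all
terms with `k > |V|` vanish). -/
def vertexCurvature (G : SimpleGraph V) [Fintype V] [DecidableEq V] [DecidableRel G.Adj]
    (p : V) : ℚ :=
  1 + ∑ k ∈ Finset.Icc 1 (Fintype.card V),
        (-1 : ℚ) ^ k * (sphereCliqueCount G p k) / (k + 1)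

/-- The Euler characteristic `χ(G) = Σ_{k ≥ 0} (-1)^k v_k`, where `v_k` is the number of
`K_{k+1}`-subgraphs of `G` (all terms with `k ≥ |V|` vanish). -/
def eulerChar (G : SimpleGraph V) [Fintype V] [DecidableEq V] [DecidableRel G.Adj] : ℚ :=
  ∑ k ∈ Finset.range (Fintype.card V + 1),
    (-1 : ℚ) ^ k * (G.cliqueFinset (k + 1)).card

lemma sphereCliqueCount_eq {V : Type*} [Fintype V] [DecidableEq V]
    (G : SimpleGraph V) [DecidableRel G.Adj] (p : V) (k : ℕ) :
    sphereCliqueCount G p k = ((G.cliqueFinset (k + 1)).filter (fun t => p ∈ t)).card := by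
  apply Finset.card_bij (fun s _ => insert p s)
  · intro s hs
    simp only [mem_filter, mem_cliqueFinset_iff] at hs ⊢
    refine ⟨hs.1.insert fun b hb => ?_, mem_insert_self _ _⟩
    have := hs.2 hb
    rwa [SimpleGraph.mem_neighborFinset] at this
  · intro s hs s' hs' h
    simp only [mem_filter] at hs hs'
    have hp : p ∉ s := fun hp => G.irrefl (by
      have := hs.2 hp; rwa [SimpleGraph.mem_neighborFinset] at this)
    have hp' : p ∉ s' := fun hp => G.irrefl (by
      have := hs'.2 hp; rwa [SimpleGraph.mem_neighborFinset] at this)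
    have : (insert p s).erase p = (insert p s').erase p := by rw [h]
    rwa [Finset.erase_insert hp, Finset.erase_insert hp'] at this
  · intro t ht
    simp only [mem_filter, mem_cliqueFinset_iff] at ht
    refine ⟨t.erase p, ?_, Finset.insert_erase ht.2⟩
    simp only [mem_filter, mem_cliqueFinset_iff]
    refine ⟨⟨ht.1.1.subset (Finset.erase_subset _ _), ?_⟩, ?_⟩
    · rw [Finset.card_erase_of_mem ht.2, ht.1.2]; omega
    · intro q hq
      rw [Finset.mem_erase] at hq
      rw [SimpleGraph.mem_neighborFinset]
      exact ht.1.1 ht.2 hq.2 (Ne.symm hq.1)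

lemma sum_sphereCliqueCount {V : Type*} [Fintype V] [DecidableEq V]
    (G : SimpleGraph V) [DecidableRel G.Adj] (k : ℕ) :
    ∑ p : V, (sphereCliqueCount G p k : ℚ) = (k + 1) * (G.cliqueFinset (k + 1)).card := by
  have h : ∀ t ∈ G.cliqueFinset (k + 1),
      ∑ p : V, (if p ∈ t then (1 : ℚ) else 0) = (k + 1 : ℚ) := by
    intro t ht
    rw [Finset.sum_boole, Finset.filter_univ_mem, (mem_cliqueFinset_iff.mp ht).2]
    push_cast; ring
  simp only [sphereCliqueCount_eq, Finset.card_filter]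
  push_cast
  rw [Finset.sum_comm, Finset.sum_congr rfl h, Finset.sum_const, nsmul_eq_mul, mul_comm]

lemma cliqueFinset_one_card {V : Type*} [Fintype V] [DecidableEq V]
    (G : SimpleGraph V) [DecidableRel G.Adj] :
    (G.cliqueFinset 1).card = Fintype.card V := by
  have : G.cliqueFinset 1 = Finset.univ.image (fun a => ({a} : Finset V)) := by
    ext s
    simp [mem_cliqueFinset_iff, isNClique_one, eq_comm]
  rw [this, Finset.card_image_of_injective _ (fun a b h => by simpa using h),
    Finset.card_univ]

/-- Gauss-Bonnet for general finite simple graphs: total curvature is the Euler characteristic. -/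
theorem gaussBonnet {V : Type*} [Fintype V] [DecidableEq V]
    (G : SimpleGraph V) [DecidableRel G.Adj] :
    ∑ p : V, vertexCurvature G p = eulerChar G := by
  unfold vertexCurvature eulerChar
  rw [Finset.sum_add_distrib, Finset.sum_const, Finset.sum_comm]
  have hsum : ∀ k ∈ Finset.Icc 1 (Fintype.card V),
      ∑ p : V, (-1 : ℚ) ^ k * (sphereCliqueCount G p k) / (k + 1)
        = (-1 : ℚ) ^ k * (G.cliqueFinset (k + 1)).card := by
    intro k _
    have hk1 : ((k : ℚ) + 1) ≠ 0 := by positivity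
    rw [← Finset.sum_div, ← Finset.mul_sum, sum_sphereCliqueCount]
    field_simp
  rw [Finset.sum_congr rfl hsum, Finset.range_eq_Ico,
    Finset.sum_eq_sum_Ico_succ_bot (Nat.succ_pos _), Nat.succ_eq_add_one, Finset.Ico_add_one_right_eq_Icc]
  simp [cliqueFinset_one_card, add_comm]
end

section
/- Let G be a finite simple graph in which every induced neighborhood is a cycle graph. Then Σ_{p∈V} (1 - deg(p)/6) = χ(G) = v_0 - v_1 + v_2. -/
open Finset SimpleGraph

/-- The induced subgraph on the neighborhood of `p` is a cycle graph `C_k` for some `k ≥ 3`. -/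
def NeighborhoodIsCycle {V : Type*} (G : SimpleGraph V) (p : V) : Prop :=
  ∃ k, 3 ≤ k ∧ Nonempty ((G.induce (G.neighborSet p)) ≃g SimpleGraph.cycleGraph k)

section aux

variable {V : Type*} [Fintype V] [DecidableEq V] (G : SimpleGraph V) [DecidableRel G.Adj]

instance instDecInduce (s : Set V) [DecidablePred (· ∈ s)] :
    DecidableRel ((G.induce s).Adj) := fun a b =>
  inferInstanceAs (Decidable (G.Adj a b))

lemma pair_eq_pair_cases {α : Type*} [DecidableEq α] {x y a b : α}
    (h : ({x, y} : Finset α) = {a, b}) : (x = a ∧ y = b) ∨ (x = b ∧ y = a) := by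
  have hx : x ∈ ({a, b} : Finset α) := h ▸ Finset.mem_insert_self x {y}
  have hy : y ∈ ({a, b} : Finset α) := by
    rw [← h]; exact Finset.mem_insert_of_mem (Finset.mem_singleton_self y)
  have ha : a ∈ ({x, y} : Finset α) := h ▸ Finset.mem_insert_self a {b}
  have hb : b ∈ ({x, y} : Finset α) := by
    rw [h]; exact Finset.mem_insert_of_mem (Finset.mem_singleton_self b)
  simp only [Finset.mem_insert, Finset.mem_singleton] at hx hy ha hb
  rcases hx with hx | hx <;> rcases hy with hy | hy <;> tauto

/-- degrees are preserved under graph isomorphisms -/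
lemma iso_degree {W X : Type*} {A : SimpleGraph W} {B : SimpleGraph X}
    (f : A ≃g B) (v : W) [Fintype (A.neighborSet v)] [Fintype (B.neighborSet (f v))] :
    A.degree v = B.degree (f v) := by
  rw [← card_neighborSet_eq_degree, ← card_neighborSet_eq_degree]
  exact Fintype.card_congr (f.mapNeighborSet v)

/-- The number of triangles through `p` equals the degree of `p`. -/
lemma triangles_through_eq_degree (h : ∀ p : V, NeighborhoodIsCycle G p) (p : V) :
    ((G.cliqueFinset 3).filter (fun t => p ∈ t)).card = G.degree p := by
  obtain ⟨k, hk3, ⟨e⟩⟩ := h p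
  set S : Set V := G.neighborSet p with hS
  set G' : SimpleGraph S := G.induce S with hG'
  -- degree p = k
  have hdegk : G.degree p = k := by
    rw [← card_neighborSet_eq_degree]
    simpa [hS] using Fintype.card_congr e.toEquiv
  -- every vertex in the induced graph has degree 2
  obtain ⟨m, rfl⟩ : ∃ m, k = m + 3 := ⟨k - 3, by omega⟩
  have hdeg2 : ∀ a : S, G'.degree a = 2 := fun a => by
    rw [iso_degree e a, cycleGraph_degree_three_le]
  -- ordered adjacent pairs in the neighborhood, counted two ways
  set P : Finset (V × V) :=
    Finset.univ.filter (fun q => G.Adj p q.1 ∧ G.Adj p q.2 ∧ G.Adj q.1 q.2) with hP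
  have hPcard : P.card = 2 * G.degree p := by
    have h1 : ∑ a : S, G'.degree a = 2 * G'.edgeFinset.card :=
      G'.sum_degrees_eq_twice_card_edges
    have h2 : 2 * G'.edgeFinset.card
        = (Finset.univ.filter fun (q : S × S) => G'.Adj q.1 q.2).card :=
      G'.two_mul_card_edgeFinset
    have h3 : ∑ a : S, G'.degree a = 2 * G.degree p := by
      simp only [hdeg2, Finset.sum_const, Finset.card_univ, smul_eq_mul]
      rw [← card_neighborSet_eq_degree]
      ring
    have h4 : (Finset.univ.filter fun (q : S × S) => G'.Adj q.1 q.2).card = P.card := by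
      apply Finset.card_bij (fun q _ => ((q.1 : V), (q.2 : V)))
      · rintro ⟨a, b⟩ hq
        simp only [hP, Finset.mem_filter, Finset.mem_univ, true_and] at hq ⊢
        exact ⟨a.2, b.2, hq⟩
      · rintro ⟨a, b⟩ _ ⟨c, d⟩ _ hq
        simp only [Prod.mk.injEq, Subtype.ext_iff] at hq ⊢
        exact ⟨hq.1, hq.2⟩
      · rintro ⟨a, b⟩ hq
        simp only [hP, Finset.mem_filter, Finset.mem_univ, true_and] at hq
        refine ⟨(⟨a, hq.1⟩, ⟨b, hq.2.1⟩), ?_, rfl⟩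
        simp only [Finset.mem_filter, Finset.mem_univ, true_and]
        exact hq.2.2
    omega
  -- each triangle through p corresponds to exactly 2 ordered pairs
  have hfiber : P.card = 2 * ((G.cliqueFinset 3).filter (fun t => p ∈ t)).card := by
    rw [Finset.card_eq_sum_card_fiberwise
      (f := fun q : V × V => insert p {q.1, q.2})
      (t := (G.cliqueFinset 3).filter (fun t => p ∈ t)) ?_]
    · rw [Finset.sum_congr rfl (g := fun _ => 2) ?_, Finset.sum_const, smul_eq_mul,
        mul_comm]
      intro t ht
      simp only [Finset.mem_filter, mem_cliqueFinset_iff] at ht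
      obtain ⟨⟨hclique, hcard⟩, hpt⟩ := ht
      -- extract the two other vertices of the triangle
      have hcard2 : (t.erase p).card = 2 := by
        rw [Finset.card_erase_of_mem hpt, hcard]
      obtain ⟨a, b, hab, hab2⟩ := Finset.card_eq_two.mp hcard2
      have hae : a ∈ t.erase p := by rw [hab2]; simp
      have hbe : b ∈ t.erase p := by rw [hab2]; simp
      have hat : a ∈ t := Finset.mem_of_mem_erase hae
      have hbt : b ∈ t := Finset.mem_of_mem_erase hbe
      have hpa : p ≠ a := (Finset.ne_of_mem_erase hae).symm
      have hpb : p ≠ b := (Finset.ne_of_mem_erase hbe).symm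
      have ht' : t = insert p {a, b} := by
        rw [← hab2, Finset.insert_erase hpt]
      have hGpa : G.Adj p a := hclique hpt hat hpa
      have hGpb : G.Adj p b := hclique hpt hbt hpb
      have hGab : G.Adj a b := hclique hat hbt hab
      have : P.filter (fun q => insert p {q.1, q.2} = t) = {(a, b), (b, a)} := by
        ext ⟨x, y⟩
        simp only [hP, Finset.mem_filter, Finset.mem_univ, true_and, Finset.mem_insert,
          Finset.mem_singleton, Prod.mk.injEq]
        constructor
        · rintro ⟨⟨hpx, hpy, hxy⟩, heq⟩
          have hxp : x ≠ p := fun hh => G.irrefl (hh ▸ hpx)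
          have hyp : y ≠ p := fun hh => G.irrefl (hh ▸ hpy)
          have hxyab : ({x, y} : Finset V) = {a, b} := by
            have h1 : ((insert p {x, y} : Finset V)).erase p
                = ((insert p {a, b} : Finset V)).erase p := by rw [heq, ht']
            rwa [Finset.erase_insert (by simp [Ne.symm hxp, Ne.symm hyp]),
              Finset.erase_insert (by simp [hpa, hpb])] at h1
          exact pair_eq_pair_cases hxyab
        · rintro (⟨rfl, rfl⟩ | ⟨rfl, rfl⟩)
          · exact ⟨⟨hGpa, hGpb, hGab⟩, ht'.symm⟩
          · exact ⟨⟨hGpb, hGpa, hGab.symm⟩, by rw [ht', Finset.pair_comm]⟩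
      rw [this]
      rw [Finset.card_insert_of_notMem (by simp [hab]), Finset.card_singleton]
    · rintro ⟨a, b⟩ hq
      change (a, b) ∈ P at hq
      simp only [hP, Finset.mem_filter, Finset.mem_univ, true_and] at hq
      obtain ⟨hpa, hpb, hab⟩ := hq
      change insert p {a, b} ∈ (G.cliqueFinset 3).filter (fun t => p ∈ t)
      simp only [Finset.mem_filter, mem_cliqueFinset_iff]
      refine ⟨is3Clique_triple_iff.2 ⟨hpa, hpb, hab⟩, Finset.mem_insert_self p _⟩
  omega

end aux

/-- Gauss-Bonnet for two-dimensional graphs: if every induced neighborhood is a cycle, then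
`Σ_p (1 - deg(p)/6) = χ(G) = v_0 - v_1 + v_2` (vertices minus edges plus triangles). -/
theorem gaussBonnet_twoDimensional {V : Type*} [Fintype V] [DecidableEq V]
    (G : SimpleGraph V) [DecidableRel G.Adj]
    (h : ∀ p : V, NeighborhoodIsCycle G p) :
    ∑ p : V, (1 - (G.degree p : ℚ) / 6)
      = (Fintype.card V : ℚ) - G.edgeFinset.card + (G.cliqueFinset 3).card := by
  -- handshake: Σ deg = 2 e
  have h2 : ∑ p : V, G.degree p = 2 * G.edgeFinset.card :=
    G.sum_degrees_eq_twice_card_edges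
  -- triangle count: Σ deg = 3 t
  have h3 : ∑ p : V, G.degree p = 3 * (G.cliqueFinset 3).card := by
    have key : ∀ p : V, ((G.cliqueFinset 3).filter (fun t => p ∈ t)).card = G.degree p :=
      triangles_through_eq_degree G h
    calc ∑ p : V, G.degree p
        = ∑ p : V, ((G.cliqueFinset 3).filter (fun t => p ∈ t)).card := by
          exact Finset.sum_congr rfl fun p _ => (key p).symm
      _ = ∑ p : V, ∑ t ∈ G.cliqueFinset 3, if p ∈ t then 1 else 0 := by
          simp only [Finset.card_filter]
      _ = ∑ t ∈ G.cliqueFinset 3, ∑ p : V, if p ∈ t then 1 else 0 := Finset.sum_comm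
      _ = ∑ t ∈ G.cliqueFinset 3, t.card := by
          refine Finset.sum_congr rfl fun t _ => ?_
          rw [← Finset.card_filter, Finset.filter_mem_eq_inter, Finset.univ_inter]
      _ = 3 * (G.cliqueFinset 3).card := by
          rw [Finset.sum_congr rfl (fun t ht => (SimpleGraph.mem_cliqueFinset_iff.1 ht).2),
            Finset.sum_const, smul_eq_mul, mul_comm]
  have hq2 : ((∑ p : V, G.degree p : ℕ) : ℚ) = 2 * G.edgeFinset.card := by
    exact_mod_cast congrArg (Nat.cast : ℕ → ℚ) h2
  have hq3 : ((∑ p : V, G.degree p : ℕ) : ℚ) = 3 * (G.cliqueFinset 3).card := by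
    exact_mod_cast congrArg (Nat.cast : ℕ → ℚ) h3
  have : ∑ p : V, (1 - (G.degree p : ℚ) / 6)
      = (Fintype.card V : ℚ) - ((∑ p : V, G.degree p : ℕ) : ℚ) / 6 := by
    rw [Finset.sum_sub_distrib]
    push_cast
    rw [← Finset.sum_div]
    simp [Finset.card_univ]
  rw [this]
  rw [hq2] at hq3
  linarith [hq2, hq3]
end
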